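/- arXiv:1704.08810 — 4 statements merged into one kernel-verified Lean document; each statement's English description precedes it below -/
import Mathlib

section
/- For nonempty finite sets A⁰, Aᵏ, A*, the following deterministic bound holds: |F(A⁰; Aᵏ) − F(A⁰; A*)| ≤ 3·|A* ∆ Aᵏ|/|A*|, where F(A; B) = 2|A ∩ B|/(|A| + |B|) and ∆ denotes symmetric difference. -/
open scoped symmDiff

lemma real_key (a k s x y d : ℝ) (ha : 1 ≤ a) (hkk : 1 ≤ k) (hss : 1 ≤ s)
    (hx : 0 ≤ x) (hy : 0 ≤ y) (hd : 0 ≤ d)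
    (hxy1 : x - y ≤ d) (hxy2 : y - x ≤ d) (hsk1 : s - k ≤ d) (hsk2 : k - s ≤ d)
    (h2x : 2 * x ≤ a + k) :
    |2 * x / (a + k) - 2 * y / (a + s)| ≤ 3 * d / s := by
  have hak : (0:ℝ) < a + k := by linarith
  have has : (0:ℝ) < a + s := by linarith
  have hs0 : (0:ℝ) < s := by linarith
  rw [div_sub_div _ _ hak.ne' has.ne', abs_div, abs_of_pos (mul_pos hak has),
    div_le_div_iff₀ (mul_pos hak has) hs0]
  have hN : |2 * x * (a + s) - (a + k) * (2 * y)| ≤ 3 * d * (a + k) := by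
    rw [abs_le]
    constructor
    · nlinarith [mul_nonneg hx hd, mul_nonneg hd hak.le]
    · nlinarith [mul_nonneg hx hd, mul_nonneg hd hak.le]
  nlinarith [mul_le_mul_of_nonneg_right hN hs0.le, mul_nonneg (mul_nonneg hd hak.le) (by linarith : (0:ℝ) ≤ a),
    mul_nonneg (mul_nonneg hd hak.le) hs0.le]

theorem F_diff_bound {α : Type*} [DecidableEq α] (A0 Ak As : Finset α)
    (h0 : A0.Nonempty) (hk : Ak.Nonempty) (hs : As.Nonempty) :
    |2 * ((A0 ∩ Ak).card : ℝ) / ((A0.card : ℝ) + (Ak.card : ℝ)) -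
      2 * ((A0 ∩ As).card : ℝ) / ((A0.card : ℝ) + (As.card : ℝ))| ≤
      3 * ((As ∆ Ak).card : ℝ) / (As.card : ℝ) := by
  have hsub1 : A0 ∩ Ak ⊆ (A0 ∩ As) ∪ (As ∆ Ak) := by
    intro x hx
    simp only [Finset.mem_inter, Finset.mem_union, Finset.mem_symmDiff] at *
    tauto
  have hsub2 : A0 ∩ As ⊆ (A0 ∩ Ak) ∪ (As ∆ Ak) := by
    intro x hx
    simp only [Finset.mem_inter, Finset.mem_union, Finset.mem_symmDiff] at *
    tauto
  have hsub3 : As ⊆ Ak ∪ (As ∆ Ak) := by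
    intro x hx
    simp only [Finset.mem_union, Finset.mem_symmDiff]
    tauto
  have hsub4 : Ak ⊆ As ∪ (As ∆ Ak) := by
    intro x hx
    simp only [Finset.mem_union, Finset.mem_symmDiff]
    tauto
  have h1 := (Finset.card_le_card hsub1).trans (Finset.card_union_le _ _)
  have h2 := (Finset.card_le_card hsub2).trans (Finset.card_union_le _ _)
  have h3 := (Finset.card_le_card hsub3).trans (Finset.card_union_le _ _)
  have h4 := (Finset.card_le_card hsub4).trans (Finset.card_union_le _ _)
  have h5 : (A0 ∩ Ak).card ≤ A0.card := Finset.card_le_card (Finset.inter_subset_left)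
  have h6 : (A0 ∩ Ak).card ≤ Ak.card := Finset.card_le_card (Finset.inter_subset_right)
  have ha1 : 1 ≤ A0.card := Finset.card_pos.mpr h0
  have hk1 : 1 ≤ Ak.card := Finset.card_pos.mpr hk
  have hs1 : 1 ≤ As.card := Finset.card_pos.mpr hs
  have := real_key (A0.card : ℝ) (Ak.card : ℝ) (As.card : ℝ)
    ((A0 ∩ Ak).card : ℝ) ((A0 ∩ As).card : ℝ) ((As ∆ Ak).card : ℝ)
    (by exact_mod_cast ha1) (by exact_mod_cast hk1) (by exact_mod_cast hs1)
    (by positivity) (by positivity) (by positivity)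
    (by have r : ((A0 ∩ Ak).card:ℝ) ≤ ((A0 ∩ As).card:ℝ) + ((As ∆ Ak).card:ℝ) := (by exact_mod_cast h1); linarith)
    (by have r : ((A0 ∩ As).card:ℝ) ≤ ((A0 ∩ Ak).card:ℝ) + ((As ∆ Ak).card:ℝ) := (by exact_mod_cast h2); linarith)
    (by have r : ((As).card:ℝ) ≤ ((Ak).card:ℝ) + ((As ∆ Ak).card:ℝ) := (by exact_mod_cast h3); linarith)
    (by have r : ((Ak).card:ℝ) ≤ ((As).card:ℝ) + ((As ∆ Ak).card:ℝ) := (by exact_mod_cast h4); linarith)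
    (by have r5 : ((A0 ∩ Ak).card:ℝ) ≤ (A0.card:ℝ) := by exact_mod_cast h5
        have r6 : ((A0 ∩ Ak).card:ℝ) ≤ (Ak.card:ℝ) := by exact_mod_cast h6
        linarith)
  exact this
end

section
/- Let A⁰, A¹, …, A^K, A* be nonempty finite sets and w₁, …, w_K nonnegative reals summing to 1. Define F̂(A⁰) = Σₖ wₖ F(A⁰; Aᵏ) and F(A⁰) = F(A⁰; A*), where F(A; B) = 2|A ∩ B|/(|A| + |B|). Then |F̂(A⁰) − F(A⁰)| ≤ 3 Σₖ wₖ |Aᵏ ∆ A*|/|A*|. -/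
open scoped symmDiff

private lemma key_real (a b c x y d : ℝ) (ha : 0 < a) (hb : 0 < b) (hc : 0 < c)
    (hx : 0 ≤ x) (hy : 0 ≤ y) (hd : 0 ≤ d)
    (hxy : |x - y| ≤ d) (hbc : |b - c| ≤ d)
    (h2x : 2 * x ≤ a + b) (h2y : 2 * y ≤ a + c) :
    |2 * x / (a + b) - 2 * y / (a + c)| ≤ 3 * d / c := by
  have hab : 0 < a + b := by linarith
  have hac : 0 < a + c := by linarith
  rw [abs_le] at hxy hbc
  obtain ⟨h1, h2⟩ := hxy
  obtain ⟨h3, h4⟩ := hbc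
  have key1 : 2 * x * (a + c) - 2 * y * (a + b) ≤ 3 * d * (a + b) := by
    nlinarith [mul_nonneg (by linarith : (0:ℝ) ≤ d - (x - y)) hab.le,
      mul_nonneg hx (by linarith : (0:ℝ) ≤ d - (c - b)),
      mul_nonneg hd (by linarith : (0:ℝ) ≤ (a + b) - 2 * x)]
  have key2 : 2 * y * (a + b) - 2 * x * (a + c) ≤ 3 * d * (a + b) := by
    nlinarith [mul_nonneg (by linarith : (0:ℝ) ≤ d - (y - x)) hab.le,
      mul_nonneg hx (by linarith : (0:ℝ) ≤ d - (b - c)),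
      mul_nonneg hd (by linarith : (0:ℝ) ≤ (a + b) - 2 * x)]
  rw [abs_le]
  constructor
  · rw [neg_le, neg_sub, div_sub_div _ _ hac.ne' hab.ne',
      div_le_div_iff₀ (by positivity) hc]
    nlinarith [mul_le_mul_of_nonneg_right key2 hc.le,
      mul_nonneg (mul_nonneg hd hab.le) ha.le]
  · rw [div_sub_div _ _ hab.ne' hac.ne', div_le_div_iff₀ (by positivity) hc]
    nlinarith [mul_le_mul_of_nonneg_right key1 hc.le,
      mul_nonneg (mul_nonneg hd hab.le) ha.le]

private lemma card_symmDiff_bound {α : Type*} [DecidableEq α] (B C : Finset α) :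
    |((B.card : ℝ)) - C.card| ≤ ((B ∆ C).card : ℝ) := by
  have h1 : B ⊆ C ∪ (B ∆ C) := by
    intro x hx
    by_cases h : x ∈ C
    · exact Finset.mem_union_left _ h
    · exact Finset.mem_union_right _ (by simp [Finset.mem_symmDiff, hx, h])
  have h2 : C ⊆ B ∪ (B ∆ C) := by
    intro x hx
    by_cases h : x ∈ B
    · exact Finset.mem_union_left _ h
    · exact Finset.mem_union_right _ (by simp [Finset.mem_symmDiff, hx, h])
  have c1 : (B.card : ℝ) ≤ C.card + (B ∆ C).card := by
    exact_mod_cast (Finset.card_le_card h1).trans (Finset.card_union_le _ _)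
  have c2 : (C.card : ℝ) ≤ B.card + (B ∆ C).card := by
    exact_mod_cast (Finset.card_le_card h2).trans (Finset.card_union_le _ _)
  rw [abs_le]
  constructor <;> linarith

private lemma card_inter_symmDiff_bound {α : Type*} [DecidableEq α] (A0 B C : Finset α) :
    |(((A0 ∩ B).card : ℝ)) - (A0 ∩ C).card| ≤ ((B ∆ C).card : ℝ) := by
  have h1 : A0 ∩ B ⊆ (A0 ∩ C) ∪ (B ∆ C) := by
    intro x hx
    rw [Finset.mem_inter] at hx
    by_cases h : x ∈ C
    · exact Finset.mem_union_left _ (Finset.mem_inter.2 ⟨hx.1, h⟩)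
    · exact Finset.mem_union_right _ (by simp [Finset.mem_symmDiff, hx.2, h])
  have h2 : A0 ∩ C ⊆ (A0 ∩ B) ∪ (B ∆ C) := by
    intro x hx
    rw [Finset.mem_inter] at hx
    by_cases h : x ∈ B
    · exact Finset.mem_union_left _ (Finset.mem_inter.2 ⟨hx.1, h⟩)
    · exact Finset.mem_union_right _ (by simp [Finset.mem_symmDiff, hx.2, h])
  have c1 : ((A0 ∩ B).card : ℝ) ≤ (A0 ∩ C).card + (B ∆ C).card := by
    exact_mod_cast (Finset.card_le_card h1).trans (Finset.card_union_le _ _)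
  have c2 : ((A0 ∩ C).card : ℝ) ≤ (A0 ∩ B).card + (B ∆ C).card := by
    exact_mod_cast (Finset.card_le_card h2).trans (Finset.card_union_le _ _)
  rw [abs_le]
  constructor <;> linarith

private lemma key_sets {α : Type*} [DecidableEq α] (A0 B C : Finset α)
    (h0 : A0.Nonempty) (hb : B.Nonempty) (hc : C.Nonempty) :
    |2 * ((A0 ∩ B).card : ℝ) / ((A0.card : ℝ) + B.card) -
      2 * ((A0 ∩ C).card : ℝ) / ((A0.card : ℝ) + C.card)| ≤
      3 * ((B ∆ C).card : ℝ) / C.card := by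
  apply key_real
  · exact_mod_cast Finset.card_pos.2 h0
  · exact_mod_cast Finset.card_pos.2 hb
  · exact_mod_cast Finset.card_pos.2 hc
  · positivity
  · positivity
  · positivity
  · exact card_inter_symmDiff_bound A0 B C
  · exact card_symmDiff_bound B C
  · have h1 : ((A0 ∩ B).card : ℝ) ≤ A0.card := by
      exact_mod_cast Finset.card_le_card (Finset.inter_subset_left (s₁ := A0) (s₂ := B))
    have h2 : ((A0 ∩ B).card : ℝ) ≤ B.card := by
      exact_mod_cast Finset.card_le_card (Finset.inter_subset_right (s₁ := A0) (s₂ := B))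
    linarith
  · have h1 : ((A0 ∩ C).card : ℝ) ≤ A0.card := by
      exact_mod_cast Finset.card_le_card (Finset.inter_subset_left (s₁ := A0) (s₂ := C))
    have h2 : ((A0 ∩ C).card : ℝ) ≤ C.card := by
      exact_mod_cast Finset.card_le_card (Finset.inter_subset_right (s₁ := A0) (s₂ := C))
    linarith

theorem Fhat_diff_bound {α : Type*} [DecidableEq α] {K : ℕ}
    (A0 As : Finset α) (A : Fin K → Finset α)
    (h0 : A0.Nonempty) (hs : As.Nonempty) (hA : ∀ k, (A k).Nonempty)
    (w : Fin K → ℝ) (hw : ∀ k, 0 ≤ w k) (hw1 : ∑ k, w k = 1) :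
    |(∑ k, w k * (2 * ((A0 ∩ A k).card : ℝ) / ((A0.card : ℝ) + ((A k).card : ℝ)))) -
      2 * ((A0 ∩ As).card : ℝ) / ((A0.card : ℝ) + (As.card : ℝ))| ≤
      3 * ∑ k, w k * (((A k ∆ As).card : ℝ) / (As.card : ℝ)) := by
  set Fs : ℝ := 2 * ((A0 ∩ As).card : ℝ) / ((A0.card : ℝ) + (As.card : ℝ)) with hFs
  have hrw : (∑ k, w k * (2 * ((A0 ∩ A k).card : ℝ) / ((A0.card : ℝ) + ((A k).card : ℝ)))) - Fs
      = ∑ k, w k * (2 * ((A0 ∩ A k).card : ℝ) / ((A0.card : ℝ) + ((A k).card : ℝ)) - Fs) := by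
    rw [eq_comm]
    simp only [mul_sub]
    rw [Finset.sum_sub_distrib, ← Finset.sum_mul, hw1, one_mul]
  rw [hrw, Finset.mul_sum]
  refine (Finset.abs_sum_le_sum_abs _ _).trans (Finset.sum_le_sum fun k _ => ?_)
  rw [abs_mul, abs_of_nonneg (hw k)]
  have hkey := key_sets A0 (A k) As h0 (hA k) hs
  calc w k * |2 * ((A0 ∩ A k).card : ℝ) / ((A0.card : ℝ) + ((A k).card : ℝ)) - Fs|
      ≤ w k * (3 * ((A k ∆ As).card : ℝ) / As.card) :=
        mul_le_mul_of_nonneg_left hkey (hw k)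
    _ = 3 * (w k * (((A k ∆ As).card : ℝ) / (As.card : ℝ))) := by ring
end

section
/- Let A⁰, Aᵏ, A* be nonempty finite sets and suppose |A⁰| ≥ ε·|A*| for some ε > 0. Then |G(A⁰; Aᵏ) − G(A⁰; A*)| ≤ (1 + 1/√ε)·|A* ∆ Aᵏ|/|A*|, where G(A; B) = |A ∩ B|/√(|A|·|B|). -/
open scoped symmDiff

set_option maxHeartbeats 1000000

private lemma card_le_card_add_symmDiff {α : Type*} [DecidableEq α] (B C : Finset α) :
    B.card ≤ C.card + (C ∆ B).card := by
  calc B.card ≤ (C ∪ (C ∆ B)).card := by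
        apply Finset.card_le_card
        intro e he
        simp only [Finset.mem_union, Finset.mem_symmDiff]
        by_cases h : e ∈ C <;> tauto
    _ ≤ C.card + (C ∆ B).card := Finset.card_union_le _ _

private lemma card_inter_le_add {α : Type*} [DecidableEq α] (A B C : Finset α) :
    (A ∩ B).card ≤ (A ∩ C).card + (C ∆ B).card := by
  calc (A ∩ B).card ≤ ((A ∩ C) ∪ (C ∆ B)).card := by
        apply Finset.card_le_card
        intro e he
        simp only [Finset.mem_inter] at he
        simp only [Finset.mem_union, Finset.mem_inter, Finset.mem_symmDiff]
        by_cases h : e ∈ C <;> tauto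
    _ ≤ _ := Finset.card_union_le _ _

theorem G_diff_bound {α : Type*} [DecidableEq α] (A0 Ak As : Finset α)
    (h0 : A0.Nonempty) (hk : Ak.Nonempty) (hs : As.Nonempty)
    (ε : ℝ) (hε : 0 < ε) (hA0 : (A0.card : ℝ) ≥ ε * (As.card : ℝ)) :
    |((A0 ∩ Ak).card : ℝ) / Real.sqrt ((A0.card : ℝ) * (Ak.card : ℝ)) -
      ((A0 ∩ As).card : ℝ) / Real.sqrt ((A0.card : ℝ) * (As.card : ℝ))| ≤
      (1 + 1 / Real.sqrt ε) * ((As ∆ Ak).card : ℝ) / (As.card : ℝ) := by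
  set a : ℝ := (A0.card : ℝ) with ha_def
  set k : ℝ := (Ak.card : ℝ) with hk_def
  set s : ℝ := (As.card : ℝ) with hs_def
  set x : ℝ := ((A0 ∩ Ak).card : ℝ) with hx_def
  set y : ℝ := ((A0 ∩ As).card : ℝ) with hy_def
  set d : ℝ := ((As ∆ Ak).card : ℝ) with hd_def
  have ha : 0 < a := by rw [ha_def]; exact_mod_cast Finset.card_pos.mpr h0
  have hkp : 0 < k := by rw [hk_def]; exact_mod_cast Finset.card_pos.mpr hk
  have hsp : 0 < s := by rw [hs_def]; exact_mod_cast Finset.card_pos.mpr hs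
  have hd0 : 0 ≤ d := by positivity
  set sa := Real.sqrt a with hsa_def
  set sk := Real.sqrt k with hsk_def
  set ss := Real.sqrt s with hss_def
  set se := Real.sqrt ε with hse_def
  have hsa : 0 < sa := Real.sqrt_pos.mpr ha
  have hsk : 0 < sk := Real.sqrt_pos.mpr hkp
  have hss : 0 < ss := Real.sqrt_pos.mpr hsp
  have hse : 0 < se := Real.sqrt_pos.mpr hε
  have hsa2 : sa * sa = a := Real.mul_self_sqrt ha.le
  have hsk2 : sk * sk = k := Real.mul_self_sqrt hkp.le
  have hss2 : ss * ss = s := Real.mul_self_sqrt hsp.le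
  have hse2 : se * se = ε := Real.mul_self_sqrt hε.le
  have hrw1 : Real.sqrt (a * k) = sa * sk := Real.sqrt_mul ha.le k
  have hrw2 : Real.sqrt (a * s) = sa * ss := Real.sqrt_mul ha.le s
  -- x ≤ sa * sk
  have hx0 : 0 ≤ x := by positivity
  have hxa : x ≤ a := by
    have h := Finset.card_le_card ((Finset.inter_subset_left : A0 ∩ Ak ⊆ A0))
    rw [hx_def, ha_def]; exact_mod_cast h
  have hxk : x ≤ k := by
    have h := Finset.card_le_card ((Finset.inter_subset_right : A0 ∩ Ak ⊆ Ak))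
    rw [hx_def, hk_def]; exact_mod_cast h
  have hxsak : x ≤ sa * sk := by
    rw [← hrw1, ← Real.sqrt_mul_self hx0]
    exact Real.sqrt_le_sqrt (mul_le_mul hxa hxk hx0 ha.le)
  -- |x - y| ≤ d
  have hxy : |x - y| ≤ d := by
    rw [abs_sub_le_iff]
    constructor
    · have := card_inter_le_add A0 Ak As
      have h2 : ((A0 ∩ Ak).card : ℝ) ≤ ((A0 ∩ As).card : ℝ) + ((As ∆ Ak).card : ℝ) := by
        exact_mod_cast this
      linarith
    · have := card_inter_le_add A0 As Ak
      have h2 : ((A0 ∩ As).card : ℝ) ≤ ((A0 ∩ Ak).card : ℝ) + ((Ak ∆ As).card : ℝ) := by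
        exact_mod_cast this
      rw [symmDiff_comm] at h2
      linarith
  -- |s - k| ≤ d
  have hsk_d : |s - k| ≤ d := by
    rw [abs_sub_le_iff]
    constructor
    · have := card_le_card_add_symmDiff As Ak
      rw [symmDiff_comm] at this
      have h2 : (As.card : ℝ) ≤ (Ak.card : ℝ) + ((As ∆ Ak).card : ℝ) := by exact_mod_cast this
      linarith
    · have := card_le_card_add_symmDiff Ak As
      have h2 : (Ak.card : ℝ) ≤ (As.card : ℝ) + ((As ∆ Ak).card : ℝ) := by exact_mod_cast this
      linarith
  -- |ss - sk| ≤ d / ss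
  have hsssk : |ss - sk| ≤ d / ss := by
    rw [le_div_iff₀ hss]
    have h1 : |ss - sk| * (ss + sk) = |s - k| := by
      rw [← abs_of_pos (show (0:ℝ) < ss + sk by linarith), ← abs_mul]
      congr 1
      rw [← hss2, ← hsk2]; ring
    calc |ss - sk| * ss ≤ |ss - sk| * (ss + sk) := by
          apply mul_le_mul_of_nonneg_left (by linarith) (abs_nonneg _)
      _ = |s - k| := h1
      _ ≤ d := hsk_d
  -- sa ≥ se * ss
  have hsass : se * ss ≤ sa := by
    have : Real.sqrt (ε * s) ≤ Real.sqrt a := Real.sqrt_le_sqrt hA0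
    rwa [Real.sqrt_mul hε.le] at this
  rw [hrw1, hrw2]
  have key : x / (sa * sk) - y / (sa * ss)
      = (x - y) / (sa * ss) + x * (ss - sk) / (sa * sk * ss) := by
    field_simp
    ring
  rw [key]
  have bound1 : |(x - y) / (sa * ss)| ≤ d / (se * s) := by
    rw [abs_div, abs_of_pos (by positivity : (0:ℝ) < sa * ss)]
    have hnum : |x - y| ≤ d := hxy
    have hden : se * s ≤ sa * ss := by
      calc se * s = se * ss * ss := by rw [← hss2]; ring
        _ ≤ sa * ss := by
          apply mul_le_mul_of_nonneg_right hsass hss.le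
    exact div_le_div₀ hd0 hnum (by positivity) hden
  have bound2 : |x * (ss - sk) / (sa * sk * ss)| ≤ d / s := by
    rw [abs_div, abs_of_pos (by positivity : (0:ℝ) < sa * sk * ss), abs_mul,
      abs_of_nonneg hx0]
    have hnum : x * |ss - sk| ≤ (sa * sk) * (d / ss) := by
      apply mul_le_mul hxsak hsssk (abs_nonneg _) (by positivity)
    calc x * |ss - sk| / (sa * sk * ss) ≤ (sa * sk) * (d / ss) / (sa * sk * ss) := by
          apply div_le_div_of_nonneg_right hnum (by positivity) |>.trans_eq rfl
      _ = d / s := by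
          rw [← hss2]; field_simp
  calc |(x - y) / (sa * ss) + x * (ss - sk) / (sa * sk * ss)|
      ≤ |(x - y) / (sa * ss)| + |x * (ss - sk) / (sa * sk * ss)| := abs_add_le _ _
    _ ≤ d / (se * s) + d / s := add_le_add bound1 bound2
    _ = (1 + 1 / se) * d / s := by field_simp; ring
end

section
/- Let A⁰, A¹, …, A^K be nonempty finite sets and w₁, …, w_K nonnegative reals summing to 1. Define F̂(A⁰) = Σₖ wₖ F(A⁰; Aᵏ) and sd(F̂(A⁰)) = √(Σₖ wₖ (F(A⁰; Aᵏ) − F̂(A⁰))²). Then for any nonempty finite set A*, sd(F̂(A⁰)) ≤ √(6 Σₖ wₖ |A* ∆ Aᵏ|/|A*|), where F(A; B) = 2|A ∩ B|/(|A| + |B|). -/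
open scoped symmDiff

lemma F_bounds (a b ab : ℝ) (ha : 0 < a) (hb : 0 < b) (h0 : 0 ≤ ab)
    (h1 : ab ≤ a) (h2 : ab ≤ b) : 0 ≤ 2*ab/(a+b) ∧ 2*ab/(a+b) ≤ 1 := by
  constructor
  · positivity
  · rw [div_le_one (by linarith)]; linarith

lemma lip (a b c ab ac d : ℝ) (ha : 0 < a) (hb : 0 < b) (hc : 0 < c)
    (hab0 : 0 ≤ ab) (hac0 : 0 ≤ ac) (hd : 0 ≤ d)
    (h1 : ab ≤ a) (h2 : ab ≤ b) (h3 : ac ≤ a) (h4 : ac ≤ c)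
    (h5 : |ab - ac| ≤ d) (h6 : |b - c| ≤ d) :
    |2*ab/(a+b) - 2*ac/(a+c)| ≤ 6*d/c := by
  rcases abs_le.1 h5 with ⟨h5a, h5b⟩
  rcases abs_le.1 h6 with ⟨h6a, h6b⟩
  obtain ⟨hF1, hF2⟩ := F_bounds a b ab ha hb hab0 h1 h2
  obtain ⟨hG1, hG2⟩ := F_bounds a c ac ha hc hac0 h3 h4
  rcases le_total c (2*d) with hcase | hcase
  · have h1' : |2*ab/(a+b) - 2*ac/(a+c)| ≤ 1 := by
      rw [abs_le]; constructor <;> linarith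
    have h3d : (3:ℝ) ≤ 6*d/c := by
      rw [le_div_iff₀ hc]; linarith
    linarith
  · have hab' : 0 < a + b := by linarith
    have hac' : 0 < a + c := by linarith
    rw [abs_le]
    have hb2 : c ≤ 2*b := by linarith
    constructor
    · rw [div_sub_div _ _ (ne_of_gt hab') (ne_of_gt hac'), neg_le, ← neg_div,
        div_le_div_iff₀ (by positivity) hc]
      have t1 : 0 ≤ (d - (ac-ab)) * (2*c*(a+b)) := mul_nonneg (by linarith) (by positivity)
      have t2 : 0 ≤ (d - (b-c)) * (2*c*ab) := mul_nonneg (by linarith) (by positivity)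
      have t3 : 0 ≤ (a+b-2*ab) * (c*d) := mul_nonneg (by linarith) (by positivity)
      have t4 : 0 ≤ (2*(a+c)-c) * (3*d*(a+b)) := mul_nonneg (by linarith) (by positivity)
      nlinarith [t1, t2, t3, t4]
    · rw [div_sub_div _ _ (ne_of_gt hab') (ne_of_gt hac'), div_le_div_iff₀ (by positivity) hc]
      have t1 : 0 ≤ (d - (ab-ac)) * (2*c*(a+c)) := mul_nonneg (by linarith) (by positivity)
      have t2 : 0 ≤ (d - (c-b)) * (2*c*ac) := mul_nonneg (by linarith) (by positivity)
      have t3 : 0 ≤ (a+c-2*ac) * (c*d) := mul_nonneg (by linarith) (by positivity)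
      have t4 : 0 ≤ (2*(a+b)-c) * (3*d*(a+c)) := mul_nonneg (by linarith) (by positivity)
      nlinarith [t1, t2, t3, t4]

lemma card_inter_le {α : Type*} [DecidableEq α] (A B C : Finset α) :
    (A ∩ B).card ≤ (A ∩ C).card + (B ∆ C).card := by
  calc (A ∩ B).card ≤ ((A ∩ C) ∪ (B ∆ C)).card := by
        apply Finset.card_le_card
        intro x hx
        simp only [Finset.mem_inter] at hx
        by_cases hxC : x ∈ C
        · exact Finset.mem_union_left _ (Finset.mem_inter.2 ⟨hx.1, hxC⟩)
        · exact Finset.mem_union_right _ (by simp [Finset.mem_symmDiff, hx.2, hxC])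
    _ ≤ _ := Finset.card_union_le _ _

lemma card_le_symm {α : Type*} [DecidableEq α] (B C : Finset α) :
    B.card ≤ C.card + (B ∆ C).card := by
  calc B.card ≤ (C ∪ (B ∆ C)).card := by
        apply Finset.card_le_card
        intro x hx
        by_cases hxC : x ∈ C
        · exact Finset.mem_union_left _ hxC
        · exact Finset.mem_union_right _ (by simp [Finset.mem_symmDiff, hx, hxC])
    _ ≤ _ := Finset.card_union_le _ _

theorem sd_Fhat_bound {α : Type*} [DecidableEq α] {K : ℕ}
    (A0 : Finset α) (A : Fin K → Finset α)
    (h0 : A0.Nonempty) (hA : ∀ k, (A k).Nonempty)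
    (w : Fin K → ℝ) (hw : ∀ k, 0 ≤ w k) (hw1 : ∑ k, w k = 1)
    (As : Finset α) (hs : As.Nonempty) :
    Real.sqrt (∑ k, w k *
        (2 * ((A0 ∩ A k).card : ℝ) / ((A0.card : ℝ) + ((A k).card : ℝ)) -
          ∑ j, w j * (2 * ((A0 ∩ A j).card : ℝ) / ((A0.card : ℝ) + ((A j).card : ℝ)))) ^ 2) ≤
      Real.sqrt (6 * ∑ k, w k * (((As ∆ A k).card : ℝ) / (As.card : ℝ))) := by
  apply Real.sqrt_le_sqrt
  set f : Fin K → ℝ := fun k => 2 * ((A0 ∩ A k).card : ℝ) / ((A0.card : ℝ) + ((A k).card : ℝ))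
    with hf
  set μ : ℝ := ∑ j, w j * f j with hμ
  set c : ℝ := 2 * ((A0 ∩ As).card : ℝ) / ((A0.card : ℝ) + (As.card : ℝ)) with hc
  have ha0 : (0:ℝ) < A0.card := by exact_mod_cast Finset.card_pos.2 h0
  have has : (0:ℝ) < As.card := by exact_mod_cast Finset.card_pos.2 hs
  -- step 1: variance minimization
  have step1 : ∑ k, w k * (f k - μ)^2 ≤ ∑ k, w k * (f k - c)^2 := by
    have expand : ∑ k, w k * (f k - c)^2 =
        (∑ k, w k * (f k - μ)^2) + 2*(μ-c)*(∑ k, w k * f k) - (μ^2-c^2)*(∑ k, w k) := by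
      rw [Finset.mul_sum, Finset.mul_sum, ← Finset.sum_add_distrib, ← Finset.sum_sub_distrib]
      exact Finset.sum_congr rfl fun k _ => by ring
    rw [expand, ← hμ, hw1]
    nlinarith [sq_nonneg (μ - c)]
  -- step 2: termwise bound
  have step2 : ∀ k, w k * (f k - c)^2 ≤ w k * (6 * (((As ∆ A k).card : ℝ) / (As.card : ℝ))) := by
    intro k
    have hak : (0:ℝ) < (A k).card := by exact_mod_cast Finset.card_pos.2 (hA k)
    have hd0 : (0:ℝ) ≤ ((As ∆ A k).card : ℝ) := by positivity
    have hsy : ((A k ∆ As).card : ℝ) = ((As ∆ A k).card : ℝ) := by rw [symmDiff_comm]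
    have habs : |f k - c| ≤ 6 * ((As ∆ A k).card : ℝ) / (As.card : ℝ) := by
      rw [hf, hc]
      apply lip _ _ _ _ _ _ ha0 hak has (by positivity) (by positivity) hd0
      · exact_mod_cast Finset.card_le_card (Finset.inter_subset_left)
      · exact_mod_cast Finset.card_le_card (Finset.inter_subset_right)
      · exact_mod_cast Finset.card_le_card (Finset.inter_subset_left)
      · exact_mod_cast Finset.card_le_card (Finset.inter_subset_right)
      · have e1 : ((A0 ∩ A k).card : ℝ) ≤ ((A0 ∩ As).card : ℝ) + ((A k ∆ As).card : ℝ) := by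
          exact_mod_cast card_inter_le A0 (A k) As
        have e2 : ((A0 ∩ As).card : ℝ) ≤ ((A0 ∩ A k).card : ℝ) + ((As ∆ A k).card : ℝ) := by
          exact_mod_cast card_inter_le A0 As (A k)
        rw [abs_le]
        constructor <;> [linarith; (rw [← hsy] at *; linarith)]
      · have e1 : (((A k).card) : ℝ) ≤ ((As.card) : ℝ) + ((A k ∆ As).card : ℝ) := by
          exact_mod_cast card_le_symm (A k) As
        have e2 : ((As.card) : ℝ) ≤ (((A k).card) : ℝ) + ((As ∆ A k).card : ℝ) := by
          exact_mod_cast card_le_symm As (A k)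
        rw [abs_le]
        constructor <;> [linarith; (rw [← hsy] at *; linarith)]
    have h1 : |f k - c| ≤ 1 := by
      obtain ⟨hF1, hF2⟩ := F_bounds (A0.card : ℝ) ((A k).card : ℝ) ((A0 ∩ A k).card : ℝ)
        ha0 hak (by positivity)
        (by exact_mod_cast Finset.card_le_card (Finset.inter_subset_left))
        (by exact_mod_cast Finset.card_le_card (Finset.inter_subset_right))
      obtain ⟨hG1, hG2⟩ := F_bounds (A0.card : ℝ) (As.card : ℝ) ((A0 ∩ As).card : ℝ)
        ha0 has (by positivity)
        (by exact_mod_cast Finset.card_le_card (Finset.inter_subset_left))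
        (by exact_mod_cast Finset.card_le_card (Finset.inter_subset_right))
      rw [hf, hc, abs_le]
      constructor <;> simp only [] <;> linarith
    have key : (f k - c)^2 ≤ 6 * (((As ∆ A k).card : ℝ) / (As.card : ℝ)) := by
      have hm : 0 ≤ |f k - c| * (1 - |f k - c|) :=
        mul_nonneg (abs_nonneg _) (by linarith)
      have hsq : |f k - c| ^ 2 = (f k - c) ^ 2 := sq_abs _
      have heq : 6 * ((As ∆ A k).card : ℝ) / (As.card : ℝ)
          = 6 * (((As ∆ A k).card : ℝ) / (As.card : ℝ)) := by ring
      nlinarith [habs, hm, hsq, heq]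
    exact mul_le_mul_of_nonneg_left key (hw k)
  calc ∑ k, w k * (f k - μ)^2 ≤ ∑ k, w k * (f k - c)^2 := step1
    _ ≤ ∑ k, w k * (6 * (((As ∆ A k).card : ℝ) / (As.card : ℝ))) :=
        Finset.sum_le_sum fun k _ => step2 k
    _ = 6 * ∑ k, w k * (((As ∆ A k).card : ℝ) / (As.card : ℝ)) := by
        rw [Finset.mul_sum]; exact Finset.sum_congr rfl fun k _ => by ring
end
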